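/- arXiv:1905.07670 — 4 statements merged into one kernel-verified Lean document; each statement's English description precedes it below -/
import Mathlib

section
/- In the crowdsourcing problem with known accuracies and prior c = 1/2, the randomized decision rule δ*₁/₂ that decides 1 if Σᵢ wᵢ*·yᵢ > Σᵢ wᵢ*/2, decides 0 if Σᵢ wᵢ*·yᵢ < Σᵢ wᵢ*/2, and outputs a fair coin flip U on equality (where wᵢ* = 2·log(γᵢ/(1−γᵢ))) has risk constant in θ: R(δ*₁/₂, 0) = R(δ*₁/₂, 1). -/
open scoped BigOperators Classical

/-- in the crowdsourcing problem with known accuracies and prior `c = 1/2`,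
the randomized rule `δ*₁/₂` (decide 1 if `Σᵢ wᵢ* yᵢ > Σᵢ wᵢ*/2`, decide 0 if `<`, and
flip a fair coin on equality, where `wᵢ* = 2 log(γᵢ/(1−γᵢ))`) has risk constant in `θ`:
`R(δ*₁/₂, 0) = R(δ*₁/₂, 1)`.  Here, given `θ`, `P(Yᵢ = θ) = γᵢ`, the risk at `θ` is the
probability of an incorrect decision, and on ties the coin contributes error `1/2`. -/
theorem half_prior_bayes_rule_constant_risk (n : ℕ) (γ : Fin n → ℝ)
    (hγ : ∀ i, 0 < γ i ∧ γ i < 1) :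
    -- risk at θ = 0
    (∑ y : Fin n → Bool,
        (∏ i, if y i = false then γ i else 1 - γ i) *
          (if (∑ i, if y i then 2 * Real.log (γ i / (1 - γ i)) else 0) >
              (∑ i, 2 * Real.log (γ i / (1 - γ i))) / 2 then 1
            else if (∑ i, if y i then 2 * Real.log (γ i / (1 - γ i)) else 0) =
              (∑ i, 2 * Real.log (γ i / (1 - γ i))) / 2 then 1 / 2 else 0)) =
    -- risk at θ = 1
    (∑ y : Fin n → Bool,
        (∏ i, if y i = true then γ i else 1 - γ i) *
          (if (∑ i, if y i then 2 * Real.log (γ i / (1 - γ i)) else 0) <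
              (∑ i, 2 * Real.log (γ i / (1 - γ i))) / 2 then 1
            else if (∑ i, if y i then 2 * Real.log (γ i / (1 - γ i)) else 0) =
              (∑ i, 2 * Real.log (γ i / (1 - γ i))) / 2 then 1 / 2 else 0)) := by
  set w : Fin n → ℝ := fun i => 2 * Real.log (γ i / (1 - γ i)) with hw
  have hbij : Function.Bijective (fun y : Fin n → Bool => fun i => !(y i)) := by
    constructor
    · intro a b h
      funext i
      have := congrFun h i
      simpa using this
    · intro y
      exact ⟨fun i => !(y i), by funext i; simp⟩
  apply Fintype.sum_bijective _ hbij
  intro y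
  have hprod : (∏ i, if y i = false then γ i else 1 - γ i)
      = ∏ i, if (!(y i)) = true then γ i else 1 - γ i := by
    apply Finset.prod_congr rfl
    intro i _
    cases y i <;> simp
  have hsum : (∑ i, if (!(y i)) then w i else 0)
      = (∑ i, w i) - (∑ i, if y i then w i else 0) := by
    rw [← Finset.sum_sub_distrib]
    apply Finset.sum_congr rfl
    intro i _
    cases y i <;> simp
  simp only [hprod]
  congr 1
  rw [hsum]
  simp only [hw] at *
  set W := ∑ i, 2 * Real.log (γ i / (1 - γ i)) with hW
  set S := ∑ i, if y i = true then 2 * Real.log (γ i / (1 - γ i)) else 0 with hS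
  clear_value W S
  have e1 : (W - S < W / 2) = (S > W / 2) := by
    apply propext; constructor <;> intro <;> linarith
  have e2 : (W - S = W / 2) = (S = W / 2) := by
    apply propext; constructor <;> intro <;> linarith
  simp only [e1, e2]
end

section
/- With Beta(αᵢ,βᵢ) priors on the unknown accuracies γᵢ (independent of each other and of θ), the marginal posterior odds satisfy P(θ=1|y)/P(θ=0|y) > 1 if and only if Σᵢ wᵢ**·yᵢ > log((1−c)/c) + Σᵢ wᵢ**/2, where wᵢ** = 2·log(αᵢ/βᵢ). -/
open scoped BigOperators

lemma real_beta_integral (a b : ℝ) (ha : 0 < a) (hb : 0 < b) :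
    ∫ x in (0:ℝ)..1, x ^ (a - 1) * (1 - x) ^ (b - 1) =
      Real.Gamma a * Real.Gamma b / Real.Gamma (a + b) := by
  have ha' : 0 < (a : ℂ).re := by simpa using ha
  have hb' : 0 < (b : ℂ).re := by simpa using hb
  have h := Complex.Gamma_mul_Gamma_eq_betaIntegral ha' hb'
  have hcast : ((∫ x in (0:ℝ)..1, x ^ (a - 1) * (1 - x) ^ (b - 1) : ℝ) : ℂ)
      = Complex.betaIntegral a b := by
    rw [Complex.betaIntegral, ← intervalIntegral.integral_ofReal]
    apply intervalIntegral.integral_congr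
    intro x hx
    rw [Set.uIcc_of_le (by norm_num : (0:ℝ) ≤ 1)] at hx
    push_cast
    rw [Complex.ofReal_cpow hx.1, Complex.ofReal_cpow (by linarith [hx.2] : (0:ℝ) ≤ 1 - x)]
    push_cast
    ring
  have hG : Real.Gamma (a + b) ≠ 0 := (Real.Gamma_pos_of_pos (by linarith)).ne'
  have : ((∫ x in (0:ℝ)..1, x ^ (a - 1) * (1 - x) ^ (b - 1) : ℝ) : ℂ)
      = ((Real.Gamma a * Real.Gamma b / Real.Gamma (a + b) : ℝ) : ℂ) := by
    rw [hcast]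
    have h2 : Complex.Gamma ((a : ℂ) + b) ≠ 0 := by
      rw [show ((a : ℂ) + b) = ((a + b : ℝ) : ℂ) by push_cast; ring, Complex.Gamma_ofReal]
      exact_mod_cast hG
    have h' : Complex.betaIntegral a b
        = Complex.Gamma a * Complex.Gamma b / Complex.Gamma ((a : ℂ) + b) := by
      rw [eq_div_iff h2, mul_comm]
      exact h.symm
    rw [h', show ((a : ℂ) + b) = ((a + b : ℝ) : ℂ) by push_cast; ring,
      Complex.Gamma_ofReal, Complex.Gamma_ofReal, Complex.Gamma_ofReal]
    push_cast
    ring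
  exact_mod_cast this

lemma int_A (a b : ℝ) (ha : 0 < a) (hb : 0 < b) :
    ∫ γ in (0:ℝ)..1, γ ^ (1:ℝ) * (1 - γ) ^ (0:ℝ) *
      (Real.Gamma (a + b) / (Real.Gamma a * Real.Gamma b) * γ ^ (a - 1) * (1 - γ) ^ (b - 1))
      = a / (a + b) := by
  set C := Real.Gamma (a + b) / (Real.Gamma a * Real.Gamma b) with hC
  have hcong : ∀ γ ∈ Set.uIcc (0:ℝ) 1,
      γ ^ (1:ℝ) * (1 - γ) ^ (0:ℝ) * (C * γ ^ (a - 1) * (1 - γ) ^ (b - 1))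
        = C * (γ ^ (a + 1 - 1) * (1 - γ) ^ (b - 1)) := by
    intro γ hγ
    rw [Set.uIcc_of_le (by norm_num : (0:ℝ) ≤ 1)] at hγ
    have h1 : γ ^ (a + 1 - 1) = γ ^ (1:ℝ) * γ ^ (a - 1) := by
      rw [show a + 1 - 1 = 1 + (a - 1) by ring]
      exact Real.rpow_add' hγ.1 (by linarith)
    rw [h1, Real.rpow_zero]
    ring
  rw [intervalIntegral.integral_congr hcong, intervalIntegral.integral_const_mul,
    real_beta_integral (a + 1) b (by linarith) hb,
    Real.Gamma_add_one ha.ne', show a + 1 + b = (a + b) + 1 by ring,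
    Real.Gamma_add_one (by positivity : a + b ≠ 0)]
  have h1 := (Real.Gamma_pos_of_pos ha).ne'
  have h2 := (Real.Gamma_pos_of_pos hb).ne'
  have h3 := (Real.Gamma_pos_of_pos (by linarith : (0:ℝ) < a + b)).ne'
  have h4 : a + b ≠ 0 := by positivity
  field_simp [hC]
  rw [hC]; field_simp

lemma int_B (a b : ℝ) (ha : 0 < a) (hb : 0 < b) :
    ∫ γ in (0:ℝ)..1, γ ^ (0:ℝ) * (1 - γ) ^ (1:ℝ) *
      (Real.Gamma (a + b) / (Real.Gamma a * Real.Gamma b) * γ ^ (a - 1) * (1 - γ) ^ (b - 1))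
      = b / (a + b) := by
  set C := Real.Gamma (a + b) / (Real.Gamma a * Real.Gamma b) with hC
  have hcong : ∀ γ ∈ Set.uIcc (0:ℝ) 1,
      γ ^ (0:ℝ) * (1 - γ) ^ (1:ℝ) * (C * γ ^ (a - 1) * (1 - γ) ^ (b - 1))
        = C * (γ ^ (a - 1) * (1 - γ) ^ (b + 1 - 1)) := by
    intro γ hγ
    rw [Set.uIcc_of_le (by norm_num : (0:ℝ) ≤ 1)] at hγ
    have h1 : (1 - γ) ^ (b + 1 - 1) = (1 - γ) ^ (1:ℝ) * (1 - γ) ^ (b - 1) := by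
      rw [show b + 1 - 1 = 1 + (b - 1) by ring]
      exact Real.rpow_add' (by linarith [hγ.2]) (by linarith)
    rw [h1, Real.rpow_zero]
    ring
  rw [intervalIntegral.integral_congr hcong, intervalIntegral.integral_const_mul,
    real_beta_integral a (b + 1) ha (by linarith),
    Real.Gamma_add_one hb.ne', show a + (b + 1) = (a + b) + 1 by ring,
    Real.Gamma_add_one (by positivity : a + b ≠ 0)]
  have h1 := (Real.Gamma_pos_of_pos ha).ne'
  have h2 := (Real.Gamma_pos_of_pos hb).ne'
  have h3 := (Real.Gamma_pos_of_pos (by linarith : (0:ℝ) < a + b)).ne'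
  have h4 : a + b ≠ 0 := by positivity
  field_simp [hC]
  rw [hC]; field_simp

/-- with `Beta(αᵢ,βᵢ)` priors on the unknown accuracies `γᵢ` (independent
of each other and of `θ`), the marginal posterior odds satisfy
`P(θ=1∣y)/P(θ=0∣y) > 1` iff `Σᵢ wᵢ** yᵢ > log((1−c)/c) + Σᵢ wᵢ**/2`, where
`wᵢ** = 2 log(αᵢ/βᵢ)`.  The marginal likelihoods integrate the accuracies out against
the Beta densities. -/
theorem beta_posterior_odds_iff (n : ℕ) (c : ℝ) (hc0 : 0 < c) (hc1 : c < 1)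
    (α β : Fin n → ℝ) (hα : ∀ i, 0 < α i) (hβ : ∀ i, 0 < β i)
    (y : Fin n → ℝ) (hy : ∀ i, y i = 0 ∨ y i = 1) :
    (c * ∏ i, ∫ γ in (0:ℝ)..1,
          γ ^ (y i) * (1 - γ) ^ (1 - y i) *
            (Real.Gamma (α i + β i) / (Real.Gamma (α i) * Real.Gamma (β i)) *
              γ ^ (α i - 1) * (1 - γ) ^ (β i - 1))) /
        ((1 - c) * ∏ i, ∫ γ in (0:ℝ)..1,
          (1 - γ) ^ (y i) * γ ^ (1 - y i) *
            (Real.Gamma (α i + β i) / (Real.Gamma (α i) * Real.Gamma (β i)) *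
              γ ^ (α i - 1) * (1 - γ) ^ (β i - 1))) > 1 ↔
      ∑ i, 2 * Real.log (α i / β i) * y i >
        Real.log ((1 - c) / c) + ∑ i, 2 * Real.log (α i / β i) / 2 := by
  set p : Fin n → ℝ := fun i => (α i) ^ (y i) * (β i) ^ (1 - y i) / (α i + β i) with hp
  set q : Fin n → ℝ := fun i => (β i) ^ (y i) * (α i) ^ (1 - y i) / (α i + β i) with hq
  have hab : ∀ i, (0:ℝ) < α i + β i := fun i => by linarith [hα i, hβ i]
  have hppos : ∀ i, 0 < p i := fun i => by
    have := Real.rpow_pos_of_pos (hα i) (y i)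
    have := Real.rpow_pos_of_pos (hβ i) (1 - y i)
    exact div_pos (by positivity) (hab i)
  have hqpos : ∀ i, 0 < q i := fun i => by
    have := Real.rpow_pos_of_pos (hβ i) (y i)
    have := Real.rpow_pos_of_pos (hα i) (1 - y i)
    exact div_pos (by positivity) (hab i)
  have hP : ∀ i, (∫ γ in (0:ℝ)..1,
      γ ^ (y i) * (1 - γ) ^ (1 - y i) *
        (Real.Gamma (α i + β i) / (Real.Gamma (α i) * Real.Gamma (β i)) *
          γ ^ (α i - 1) * (1 - γ) ^ (β i - 1))) = p i := by
    intro i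
    rcases hy i with h | h <;> rw [hp] <;> simp only [h, sub_zero, sub_self] <;>
      rw [Real.rpow_zero, Real.rpow_one]
    · rw [int_B (α i) (β i) (hα i) (hβ i)]; simp
    · rw [int_A (α i) (β i) (hα i) (hβ i)]; simp
  have hQ : ∀ i, (∫ γ in (0:ℝ)..1,
      (1 - γ) ^ (y i) * γ ^ (1 - y i) *
        (Real.Gamma (α i + β i) / (Real.Gamma (α i) * Real.Gamma (β i)) *
          γ ^ (α i - 1) * (1 - γ) ^ (β i - 1))) = q i := by
    intro i
    rcases hy i with h | h <;> rw [hq] <;> simp only [h, sub_zero, sub_self]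
    · rw [show (∫ γ in (0:ℝ)..1, (1 - γ) ^ (0:ℝ) * γ ^ (1:ℝ) *
          (Real.Gamma (α i + β i) / (Real.Gamma (α i) * Real.Gamma (β i)) *
            γ ^ (α i - 1) * (1 - γ) ^ (β i - 1))) =
          ∫ γ in (0:ℝ)..1, γ ^ (1:ℝ) * (1 - γ) ^ (0:ℝ) *
          (Real.Gamma (α i + β i) / (Real.Gamma (α i) * Real.Gamma (β i)) *
            γ ^ (α i - 1) * (1 - γ) ^ (β i - 1))
          from intervalIntegral.integral_congr fun γ _ => by ring,
        int_A (α i) (β i) (hα i) (hβ i)]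
      rw [Real.rpow_zero, Real.rpow_one]; simp
    · rw [show (∫ γ in (0:ℝ)..1, (1 - γ) ^ (1:ℝ) * γ ^ (0:ℝ) *
          (Real.Gamma (α i + β i) / (Real.Gamma (α i) * Real.Gamma (β i)) *
            γ ^ (α i - 1) * (1 - γ) ^ (β i - 1))) =
          ∫ γ in (0:ℝ)..1, γ ^ (0:ℝ) * (1 - γ) ^ (1:ℝ) *
          (Real.Gamma (α i + β i) / (Real.Gamma (α i) * Real.Gamma (β i)) *
            γ ^ (α i - 1) * (1 - γ) ^ (β i - 1))
          from intervalIntegral.integral_congr fun γ _ => by ring,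
        int_B (α i) (β i) (hα i) (hβ i)]
      rw [Real.rpow_zero, Real.rpow_one]; simp
  simp only [hP, hQ]
  have hPprod : 0 < ∏ i, p i := Finset.prod_pos fun i _ => hppos i
  have hQprod : 0 < ∏ i, q i := Finset.prod_pos fun i _ => hqpos i
  have hc1' : (0:ℝ) < 1 - c := by linarith
  rw [gt_iff_lt, one_lt_div (by positivity),
    ← Real.log_lt_log_iff (by positivity) (by positivity),
    Real.log_mul hc1'.ne' hQprod.ne', Real.log_mul hc0.ne' hPprod.ne',
    Real.log_prod (fun i _ => (hqpos i).ne'),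
    Real.log_prod (fun i _ => (hppos i).ne')]
  have hlog : ∀ i, Real.log (p i) - Real.log (q i)
      = 2 * Real.log (α i / β i) * y i - Real.log (α i / β i) := by
    intro i
    have hapow := Real.rpow_pos_of_pos (hα i) (y i)
    have hbpow := Real.rpow_pos_of_pos (hβ i) (1 - y i)
    have hapow' := Real.rpow_pos_of_pos (hα i) (1 - y i)
    have hbpow' := Real.rpow_pos_of_pos (hβ i) (y i)
    rw [hp, hq]
    simp only
    rw [Real.log_div (by positivity) (hab i).ne', Real.log_div (by positivity) (hab i).ne',
      Real.log_mul hapow.ne' hbpow.ne', Real.log_mul hbpow'.ne' hapow'.ne',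
      Real.log_rpow (hα i), Real.log_rpow (hβ i), Real.log_rpow (hα i), Real.log_rpow (hβ i),
      Real.log_div (hα i).ne' (hβ i).ne']
    ring
  have hsum : ∑ i, Real.log (p i) - ∑ i, Real.log (q i)
      = ∑ i, 2 * Real.log (α i / β i) * y i - ∑ i, Real.log (α i / β i) := by
    rw [← Finset.sum_sub_distrib, ← Finset.sum_sub_distrib]
    exact Finset.sum_congr rfl fun i _ => hlog i
  have hhalf : ∑ i, 2 * Real.log (α i / β i) / 2 = ∑ i, Real.log (α i / β i) :=
    Finset.sum_congr rfl fun i _ => by ring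
  rw [hhalf, Real.log_div hc1'.ne' hc0.ne']
  constructor <;> intro h <;> [linarith [hsum]; linarith [hsum]]
end

section
/- In the crowdsourcing problem with unknown accuracies, any decision rule δ such that for some observation y the output δ(y,U) is a constant d (neither U nor 1−U) has sup-risk equal to 1; hence a rule is minimax if and only if for every y, δ(y,U) equals U or 1−U. -/
open scoped BigOperators Classical

/-- `P(Y = y ∣ θ, γ)`: given `(θ,γ)` the `Yᵢ` are independent with
`P(Yᵢ = θ ∣ θ, γᵢ) = γᵢ`. -/
noncomputable def crowdProb (n : ℕ) (θ : Bool) (γ : Fin n → ℝ) (y : Fin n → Bool) : ℝ :=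
  ∏ i, if y i = θ then γ i else 1 - γ i

/-- The risk `R(δ,(θ,γ)) = P(δ(Y,U) ≠ θ ∣ θ, γ)` of a decision rule using an
independent fair coin `U`. -/
noncomputable def crowdRisk (n : ℕ) (δ : (Fin n → Bool) → Bool → Bool)
    (θ : Bool) (γ : Fin n → ℝ) : ℝ :=
  ∑ y : Fin n → Bool, ∑ u : Bool,
    crowdProb n θ γ y * (1 / 2) * (if δ y u = θ then 0 else 1)

namespace CrowdAux

noncomputable def supRisk (n : ℕ) (δ : (Fin n → Bool) → Bool → Bool) : ℝ :=
  ⨆ θ : Bool, ⨆ γ : {g : Fin n → ℝ // ∀ i, g i ∈ Set.Icc (0:ℝ) 1},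
    crowdRisk n δ θ γ.1

instance (n : ℕ) : Nonempty {g : Fin n → ℝ // ∀ i, g i ∈ Set.Icc (0:ℝ) 1} :=
  ⟨⟨fun _ => 0, fun _ => by constructor <;> norm_num⟩⟩

lemma crowdProb_nonneg (n : ℕ) (θ : Bool) (γ : Fin n → ℝ)
    (h : ∀ i, γ i ∈ Set.Icc (0:ℝ) 1) (y : Fin n → Bool) :
    0 ≤ crowdProb n θ γ y := by
  refine Finset.prod_nonneg fun i _ => ?_
  rcases h i with ⟨h0, h1⟩
  split <;> linarith

lemma crowdProb_sum (n : ℕ) (θ : Bool) (γ : Fin n → ℝ) :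
    ∑ y : Fin n → Bool, crowdProb n θ γ y = 1 := by
  unfold crowdProb
  have huniv : (Finset.univ : Finset (Fin n → Bool)) =
      Fintype.piFinset (fun _ : Fin n => (Finset.univ : Finset Bool)) :=
    (Fintype.piFinset_univ).symm
  rw [huniv, ← Finset.prod_univ_sum (f := fun (i : Fin n) (b : Bool) =>
    if b = θ then γ i else 1 - γ i)]
  refine Finset.prod_eq_one fun i _ => ?_
  cases θ <;> simp

lemma crowdRisk_nonneg (n : ℕ) (δ : (Fin n → Bool) → Bool → Bool) (θ : Bool)
    (γ : Fin n → ℝ) (h : ∀ i, γ i ∈ Set.Icc (0:ℝ) 1) :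
    0 ≤ crowdRisk n δ θ γ := by
  refine Finset.sum_nonneg fun y _ => Finset.sum_nonneg fun u _ => ?_
  have := crowdProb_nonneg n θ γ h y
  have : (0:ℝ) ≤ crowdProb n θ γ y * (1/2) := by linarith
  split <;> nlinarith

lemma crowdRisk_le_one (n : ℕ) (δ : (Fin n → Bool) → Bool → Bool) (θ : Bool)
    (γ : Fin n → ℝ) (h : ∀ i, γ i ∈ Set.Icc (0:ℝ) 1) :
    crowdRisk n δ θ γ ≤ 1 := by
  unfold crowdRisk
  have hle : ∀ y : Fin n → Bool,
      (∑ u : Bool, crowdProb n θ γ y * (1/2) * (if δ y u = θ then 0 else 1))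
        ≤ crowdProb n θ γ y := by
    intro y
    have hp := crowdProb_nonneg n θ γ h y
    rw [Fintype.sum_bool]
    have h1 : ∀ u : Bool, crowdProb n θ γ y * (1/2) * (if δ y u = θ then 0 else 1)
        ≤ crowdProb n θ γ y * (1/2) := by
      intro u; split <;> nlinarith
    have := h1 true; have := h1 false; linarith
  calc (∑ y : Fin n → Bool, ∑ u : Bool,
          crowdProb n θ γ y * (1/2) * (if δ y u = θ then 0 else 1))
      ≤ ∑ y : Fin n → Bool, crowdProb n θ γ y :=
        Finset.sum_le_sum fun y _ => hle y
    _ = 1 := crowdProb_sum n θ γ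

lemma crowdRisk_coin (n : ℕ) (δ : (Fin n → Bool) → Bool → Bool)
    (h : ∀ y : Fin n → Bool, (∀ u, δ y u = u) ∨ (∀ u, δ y u = !u))
    (θ : Bool) (γ : Fin n → ℝ) :
    crowdRisk n δ θ γ = 1/2 := by
  unfold crowdRisk
  have hy : ∀ y : Fin n → Bool,
      (∑ u : Bool, crowdProb n θ γ y * (1/2) * (if δ y u = θ then 0 else 1))
        = crowdProb n θ γ y * (1/2) := by
    intro y
    rcases h y with hc | hc <;> cases θ <;>
      simp [Fintype.sum_bool, hc true, hc false] <;> ring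
  rw [Finset.sum_congr rfl fun y _ => hy y, ← Finset.sum_mul, crowdProb_sum]
  ring

lemma crowdRisk_bad (n : ℕ) (δ : (Fin n → Bool) → Bool → Bool)
    (y : Fin n → Bool) (d : Bool) (h : ∀ u, δ y u = d) :
    crowdRisk n δ (!d) (fun i => if y i = !d then 1 else 0) = 1 := by
  set γ : Fin n → ℝ := fun i => if y i = !d then 1 else 0 with hγ
  have hmem : ∀ i, γ i ∈ Set.Icc (0:ℝ) 1 := by
    intro i; simp only [hγ]; split <;> constructor <;> norm_num
  refine le_antisymm (crowdRisk_le_one n δ (!d) γ hmem) ?_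
  have hPy : crowdProb n (!d) γ y = 1 := by
    unfold crowdProb
    refine Finset.prod_eq_one fun i _ => ?_
    by_cases hi : y i = !d <;> simp [hγ, hi]
  have hterm : (∑ u : Bool, crowdProb n (!d) γ y * (1/2) * (if δ y u = !d then 0 else 1)) = 1 := by
    have hne : ∀ u, ¬(δ y u = !d) := by
      intro u hu; rw [h u] at hu; cases d <;> simp at hu
    rw [Fintype.sum_bool, if_neg (hne true), if_neg (hne false), hPy]
    ring
  unfold crowdRisk
  calc (1:ℝ) = ∑ u : Bool, crowdProb n (!d) γ y * (1/2) * (if δ y u = !d then 0 else 1) :=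
        hterm.symm
    _ ≤ ∑ y' : Fin n → Bool, ∑ u : Bool,
          crowdProb n (!d) γ y' * (1/2) * (if δ y' u = !d then 0 else 1) := by
        refine Finset.single_le_sum (f := fun y' : Fin n → Bool =>
          ∑ u : Bool, crowdProb n (!d) γ y' * (1/2) * (if δ y' u = !d then 0 else 1))
          (fun y' _ => ?_) (Finset.mem_univ y)
        refine Finset.sum_nonneg fun u _ => ?_
        have hp := crowdProb_nonneg n (!d) γ hmem y'
        split <;> nlinarith

lemma le_supRisk (n : ℕ) (δ : (Fin n → Bool) → Bool → Bool) (θ : Bool)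
    (γ : {g : Fin n → ℝ // ∀ i, g i ∈ Set.Icc (0:ℝ) 1}) :
    crowdRisk n δ θ γ.1 ≤ supRisk n δ := by
  have hb1 : BddAbove (Set.range fun γ' : {g : Fin n → ℝ // ∀ i, g i ∈ Set.Icc (0:ℝ) 1} =>
      crowdRisk n δ θ γ'.1) := by
    refine ⟨1, ?_⟩
    rintro _ ⟨γ', rfl⟩
    exact crowdRisk_le_one n δ θ γ'.1 γ'.2
  have h1 : crowdRisk n δ θ γ.1 ≤
      ⨆ γ' : {g : Fin n → ℝ // ∀ i, g i ∈ Set.Icc (0:ℝ) 1}, crowdRisk n δ θ γ'.1 :=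
    le_ciSup hb1 γ
  refine h1.trans ?_
  have hb2 : BddAbove (Set.range fun θ' : Bool =>
      ⨆ γ' : {g : Fin n → ℝ // ∀ i, g i ∈ Set.Icc (0:ℝ) 1}, crowdRisk n δ θ' γ'.1) := by
    refine ⟨1, ?_⟩
    rintro _ ⟨θ', rfl⟩
    exact ciSup_le fun γ' => crowdRisk_le_one n δ θ' γ'.1 γ'.2
  exact le_ciSup hb2 θ

lemma supRisk_le_one (n : ℕ) (δ : (Fin n → Bool) → Bool → Bool) :
    supRisk n δ ≤ 1 :=
  ciSup_le fun θ => ciSup_le fun γ => crowdRisk_le_one n δ θ γ.1 γ.2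

lemma supRisk_coin (n : ℕ) (δ : (Fin n → Bool) → Bool → Bool)
    (h : ∀ y : Fin n → Bool, (∀ u, δ y u = u) ∨ (∀ u, δ y u = !u)) :
    supRisk n δ = 1/2 := by
  refine le_antisymm (ciSup_le fun θ => ciSup_le fun γ => le_of_eq (crowdRisk_coin n δ h θ γ.1)) ?_
  have γ0 : {g : Fin n → ℝ // ∀ i, g i ∈ Set.Icc (0:ℝ) 1} := Classical.arbitrary _
  calc (1/2 : ℝ) = crowdRisk n δ true γ0.1 := (crowdRisk_coin n δ h true γ0.1).symm
    _ ≤ supRisk n δ := le_supRisk n δ true γ0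

lemma supRisk_bad (n : ℕ) (δ : (Fin n → Bool) → Bool → Bool)
    (h : ∃ (y : Fin n → Bool) (d : Bool), ∀ u, δ y u = d) :
    supRisk n δ = 1 := by
  obtain ⟨y, d, hd⟩ := h
  refine le_antisymm (supRisk_le_one n δ) ?_
  have hmem : ∀ i, (fun i => if y i = !d then (1:ℝ) else 0) i ∈ Set.Icc (0:ℝ) 1 := by
    intro i; dsimp only; split <;> constructor <;> norm_num
  calc (1:ℝ) = crowdRisk n δ (!d) (fun i => if y i = !d then 1 else 0) :=
        (crowdRisk_bad n δ y d hd).symm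
    _ ≤ supRisk n δ := le_supRisk n δ (!d) ⟨_, hmem⟩

lemma dichotomy (n : ℕ) (δ : (Fin n → Bool) → Bool → Bool) :
    (∀ y : Fin n → Bool, (∀ u, δ y u = u) ∨ (∀ u, δ y u = !u)) ∨
      (∃ (y : Fin n → Bool) (d : Bool), ∀ u, δ y u = d) := by
  by_cases h : ∀ y : Fin n → Bool, (∀ u, δ y u = u) ∨ (∀ u, δ y u = !u)
  · exact Or.inl h
  · right
    push_neg at h
    obtain ⟨y, h1, h2⟩ := h
    obtain ⟨u1, hu1⟩ := h1
    obtain ⟨u2, hu2⟩ := h2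
    refine ⟨y, δ y true, fun u => ?_⟩
    cases hb : δ y false <;> cases ht : δ y true <;> cases u <;>
      simp_all <;>
      first
        | (exact absurd (fun u => by cases u <;> simp [hb, ht]) (by simp_all))
        | skip
    all_goals
      exfalso
      cases u1 <;> cases u2 <;> simp_all
  
lemma infSup (n : ℕ) :
    (⨅ δ' : (Fin n → Bool) → Bool → Bool, supRisk n δ') = 1/2 := by
  have hlb : ∀ δ' : (Fin n → Bool) → Bool → Bool, (1/2 : ℝ) ≤ supRisk n δ' := by
    intro δ'
    rcases dichotomy n δ' with h | h
    · exact (supRisk_coin n δ' h).ge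
    · rw [supRisk_bad n δ' h]; norm_num
  refine le_antisymm ?_ (le_ciInf hlb)
  have : supRisk n (fun _ u => u) = 1/2 :=
    supRisk_coin n _ (fun y => Or.inl fun u => rfl)
  calc (⨅ δ' : (Fin n → Bool) → Bool → Bool, supRisk n δ') ≤ supRisk n (fun _ u => u) := by
        refine ciInf_le ⟨1/2, ?_⟩ _
        rintro _ ⟨δ', rfl⟩
        exact hlb δ'
    _ = 1/2 := this

end CrowdAux

/-- over `Θ = {0,1} × [0,1]ⁿ`, any decision rule whose output at some
observation `y` is a constant `d` (neither `U` nor `1−U`) has sup-risk equal to `1`;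
hence a rule is minimax iff for every `y` its output is either `U` or `1−U`. -/
theorem minimax_iff_coin_like (n : ℕ) (δ : (Fin n → Bool) → Bool → Bool) :
    ((∃ (y : Fin n → Bool) (d : Bool), ∀ u, δ y u = d) →
      (⨆ θ : Bool, ⨆ γ : {g : Fin n → ℝ // ∀ i, g i ∈ Set.Icc (0:ℝ) 1},
          crowdRisk n δ θ γ.1) = 1) ∧
    ((⨆ θ : Bool, ⨆ γ : {g : Fin n → ℝ // ∀ i, g i ∈ Set.Icc (0:ℝ) 1},
          crowdRisk n δ θ γ.1) =
        (⨅ δ' : (Fin n → Bool) → Bool → Bool,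
          ⨆ θ : Bool, ⨆ γ : {g : Fin n → ℝ // ∀ i, g i ∈ Set.Icc (0:ℝ) 1},
            crowdRisk n δ' θ γ.1) ↔
      ∀ y : Fin n → Bool, (∀ u, δ y u = u) ∨ (∀ u, δ y u = !u)) := by
  constructor
  · exact fun h => CrowdAux.supRisk_bad n δ h
  · have hinf : (⨅ δ' : (Fin n → Bool) → Bool → Bool,
        ⨆ θ : Bool, ⨆ γ : {g : Fin n → ℝ // ∀ i, g i ∈ Set.Icc (0:ℝ) 1},
          crowdRisk n δ' θ γ.1) = 1/2 := CrowdAux.infSup n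
    rw [hinf]
    constructor
    · intro hs
      rcases CrowdAux.dichotomy n δ with h | h
      · exact h
      · exfalso
        have h1 : (⨆ θ : Bool, ⨆ γ : {g : Fin n → ℝ // ∀ i, g i ∈ Set.Icc (0:ℝ) 1},
            crowdRisk n δ θ γ.1) = 1 := CrowdAux.supRisk_bad n δ h
        rw [h1] at hs
        norm_num at hs
    · intro h
      exact CrowdAux.supRisk_coin n δ h
end

section
/- On the restricted parameter space Θ* = {(θ,γ): θ∈{0,1}, γᵢ ≥ 1/2+ε for all i} with ε ∈ (0,1/2) and n odd, the majority rule δ_M(y)=1{ȳ>1/2} is minimax: sup_{ξ∈Θ*} R(δ_M,ξ) = inf_δ sup_{ξ∈Θ*} R(δ,ξ), and this common value equals P(Bin(n, 1/2−ε) > n/2). -/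
open scoped BigOperators Classical

/-- The majority rule `δ_M(y) = 1{ȳ > 1/2}` (it ignores the coin). -/
noncomputable def majorityRule (n : ℕ) : (Fin n → Bool) → Bool → Bool :=
  fun y _ => if (n : ℝ) / 2 < ∑ i, (if y i then (1 : ℝ) else 0) then true else false

section Aux
open Finset

noncomputable def kOf {n : ℕ} (y : Fin n → Bool) : ℕ := (univ.filter fun i => y i = true).card

noncomputable def majInd (n : ℕ) (θ : Bool) (y : Fin n → Bool) : ℝ :=
  if majorityRule n y true = θ then 0 else 1

lemma kOf_le (n : ℕ) (y : Fin n → Bool) : kOf y ≤ n := by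
  simpa [kOf] using (Finset.card_filter_le univ (fun i => y i = true)).trans_eq (by simp)

lemma kR_eq (n : ℕ) (y : Fin n → Bool) :
    ∑ i, (if y i then (1:ℝ) else 0) = (kOf y : ℝ) := by
  rw [Finset.sum_boole]; simp [kOf]

lemma majInd_true (n : ℕ) (y : Fin n → Bool) :
    majInd n true y = if (n : ℝ) / 2 < (kOf y : ℝ) then 0 else 1 := by
  unfold majInd majorityRule
  rw [kR_eq]
  split_ifs with h h2 h3 <;> simp_all

lemma majInd_false (n : ℕ) (y : Fin n → Bool) :
    majInd n false y = if (n : ℝ) / 2 < (kOf y : ℝ) then 1 else 0 := by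
  unfold majInd majorityRule
  rw [kR_eq]
  split_ifs with h h2 h3 <;> simp_all

lemma majInd_nonneg (n : ℕ) (θ : Bool) (y : Fin n → Bool) : 0 ≤ majInd n θ y := by
  unfold majInd; split_ifs <;> norm_num

lemma crowdRisk_majority (n : ℕ) (θ : Bool) (γ : Fin n → ℝ) :
    crowdRisk n (majorityRule n) θ γ = ∑ y : Fin n → Bool, crowdProb n θ γ y * majInd n θ y := by
  unfold crowdRisk majInd
  refine Finset.sum_congr rfl fun y _ => ?_
  rw [Fintype.sum_bool]
  simp only [majorityRule]
  ring

lemma crowdProb_const_true (n : ℕ) (p : ℝ) (y : Fin n → Bool) :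
    crowdProb n true (fun _ => p) y = p ^ kOf y * (1 - p) ^ (n - kOf y) := by
  unfold crowdProb
  rw [Finset.prod_ite]
  have hc : (univ.filter fun i => ¬ (y i = true)).card = n - kOf y := by
    have := Finset.card_filter_add_card_filter_not (s := (univ : Finset (Fin n)))
      (p := fun i => y i = true)
    simp only [Finset.card_univ, Fintype.card_fin] at this
    unfold kOf; omega
  rw [Finset.prod_const, Finset.prod_const, hc]
  rfl

lemma crowdProb_const_false (n : ℕ) (p : ℝ) (y : Fin n → Bool) :
    crowdProb n false (fun _ => p) y = (1 - p) ^ kOf y * p ^ (n - kOf y) := by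
  unfold crowdProb
  rw [Finset.prod_ite]
  have h1 : (univ.filter fun i => y i = false) = (univ.filter fun i => ¬ (y i = true)) := by
    ext i; simp
  have hc : (univ.filter fun i => ¬ (y i = true)).card = n - kOf y := by
    have := Finset.card_filter_add_card_filter_not (s := (univ : Finset (Fin n)))
      (p := fun i => y i = true)
    simp only [Finset.card_univ, Fintype.card_fin] at this
    unfold kOf; omega
  rw [Finset.prod_const, Finset.prod_const, h1, hc]
  have h2 : (univ.filter fun i => ¬ (y i = false)) = (univ.filter fun i => y i = true) := by
    ext i; simp
  rw [h2]
  rw [mul_comm]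
  rfl

lemma sum_fun_card (n : ℕ) (f : ℕ → ℝ) :
    ∑ y : Fin n → Bool, f (kOf y) = ∑ k ∈ Finset.range (n+1), (n.choose k : ℝ) * f k := by
  classical
  let e : Finset (Fin n) ≃ (Fin n → Bool) :=
    { toFun := fun s i => decide (i ∈ s)
      invFun := fun y => univ.filter fun i => y i = true
      left_inv := fun s => by ext i; simp
      right_inv := fun y => by funext i; simp }
  rw [← Equiv.sum_comp e (fun y => f (kOf y))]
  have h1 : ∀ s : Finset (Fin n), kOf (e s) = s.card := by
    intro s
    unfold kOf
    congr 1
    ext i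
    simp [e]
  simp only [h1]
  rw [← Finset.powerset_univ, Finset.sum_powerset]
  rw [Finset.card_univ, Fintype.card_fin]
  refine Finset.sum_congr rfl fun j hj => ?_
  have := Finset.sum_powersetCard j (univ : Finset (Fin n)) f
  rw [Finset.card_univ, Fintype.card_fin] at this
  calc ∑ t ∈ Finset.powersetCard j (univ : Finset (Fin n)), f t.card
      = (n.choose j) • f j := this
    _ = (n.choose j : ℝ) * f j := by simp

lemma half_ne (n k : ℕ) (hn : Odd n) : (n : ℝ) / 2 ≠ (k : ℝ) := by
  intro h
  have h2 : (n : ℝ) = 2 * k := by linarith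
  have h3 : n = 2 * k := by exact_mod_cast h2
  obtain ⟨m, hm⟩ := hn
  omega

noncomputable def binTail (n : ℕ) (ε : ℝ) : ℝ :=
  ∑ k ∈ Finset.range (n + 1),
    if (n : ℝ) / 2 < (k : ℝ) then
      (n.choose k : ℝ) * (1 / 2 - ε) ^ k * (1 / 2 + ε) ^ (n - k)
    else 0

lemma risk_maj_const_false (n : ℕ) (ε : ℝ) :
    crowdRisk n (majorityRule n) false (fun _ => 1/2 + ε) = binTail n ε := by
  rw [crowdRisk_majority]
  have key : ∀ y : Fin n → Bool, crowdProb n false (fun _ => 1/2 + ε) y * majInd n false y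
      = (if (n : ℝ) / 2 < (kOf y : ℝ) then (1/2 - ε) ^ (kOf y) * (1/2 + ε) ^ (n - kOf y) else 0) := by
    intro y
    rw [crowdProb_const_false, majInd_false]
    have h : (1 : ℝ) - (1/2 + ε) = 1/2 - ε := by ring
    rw [h]
    split_ifs <;> ring
  have step1 : (∑ y : Fin n → Bool, crowdProb n false (fun _ => 1/2 + ε) y * majInd n false y)
      = ∑ y : Fin n → Bool,
        (fun k : ℕ => if (n : ℝ) / 2 < (k : ℝ) then (1/2 - ε) ^ k * (1/2 + ε) ^ (n - k) else 0) (kOf y) :=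
    Finset.sum_congr rfl fun y _ => key y
  rw [step1, sum_fun_card n
    (fun k : ℕ => if (n : ℝ) / 2 < (k : ℝ) then (1/2 - ε) ^ k * (1/2 + ε) ^ (n - k) else 0)]
  unfold binTail
  refine Finset.sum_congr rfl fun k hk => ?_
  split_ifs <;> ring

lemma risk_maj_const_true (n : ℕ) (hn : Odd n) (ε : ℝ) :
    crowdRisk n (majorityRule n) true (fun _ => 1/2 + ε) = binTail n ε := by
  rw [crowdRisk_majority]
  have key : ∀ y : Fin n → Bool, crowdProb n true (fun _ => 1/2 + ε) y * majInd n true y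
      = (if (n : ℝ) / 2 < (kOf y : ℝ) then 0 else (1/2 + ε) ^ (kOf y) * (1/2 - ε) ^ (n - kOf y)) := by
    intro y
    rw [crowdProb_const_true, majInd_true]
    have h : (1 : ℝ) - (1/2 + ε) = 1/2 - ε := by ring
    rw [h]
    split_ifs <;> ring
  have step1 : (∑ y : Fin n → Bool, crowdProb n true (fun _ => 1/2 + ε) y * majInd n true y)
      = ∑ y : Fin n → Bool,
        (fun k : ℕ => if (n : ℝ) / 2 < (k : ℝ) then 0 else (1/2 + ε) ^ k * (1/2 - ε) ^ (n - k)) (kOf y) :=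
    Finset.sum_congr rfl fun y _ => key y
  rw [step1, sum_fun_card n
    (fun k : ℕ => if (n : ℝ) / 2 < (k : ℝ) then 0 else (1/2 + ε) ^ k * (1/2 - ε) ^ (n - k))]
  unfold binTail
  rw [← Finset.sum_range_reflect]
  refine Finset.sum_congr rfl fun k hk => ?_
  rw [Finset.mem_range] at hk
  have hkn : k ≤ n := by omega
  have h2 : n + 1 - 1 - k = n - k := by omega
  rw [h2]
  have h3 : n - (n - k) = k := by omega
  have h4 : (n.choose (n - k) : ℝ) = (n.choose k : ℝ) := by
    rw [Nat.choose_symm hkn]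
  have h5 : ((n - k : ℕ) : ℝ) = (n : ℝ) - k := by
    push_cast [Nat.cast_sub hkn]; ring
  rw [h3, h4, h5]
  have hne := half_ne n k hn
  by_cases h : (n : ℝ) / 2 < (k : ℝ)
  · rw [if_pos h, if_neg (show ¬((n : ℝ) / 2 < (n : ℝ) - (k : ℝ)) by intro h'; linarith)]
    ring
  · have hlt : (k : ℝ) < (n : ℝ) / 2 := lt_of_le_of_ne (not_lt.mp h) (Ne.symm hne)
    rw [if_neg h, if_pos (show (n : ℝ) / 2 < (n : ℝ) - (k : ℝ) by linarith)]
    ring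



lemma kR_update (n : ℕ) (y : Fin n → Bool) (i : Fin n) (b : Bool) :
    ∑ j, (if Function.update y i b j then (1:ℝ) else 0)
      = (∑ j, (if y j then (1:ℝ) else 0)) + ((if b then (1:ℝ) else 0) - (if y i then (1:ℝ) else 0)) := by
  have hfun : (fun j => if Function.update y i b j then (1:ℝ) else 0)
      = Function.update (fun j => if y j then (1:ℝ) else 0) i (if b then (1:ℝ) else 0) := by
    funext j
    by_cases h : j = i
    · subst h; simp
    · simp [Function.update_of_ne h]
  calc ∑ j, (if Function.update y i b j then (1:ℝ) else 0)
      = ∑ j, Function.update (fun j => if y j then (1:ℝ) else 0) i (if b then (1:ℝ) else 0) j := by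
        rw [hfun]
    _ = (if b then (1:ℝ) else 0) + ∑ j ∈ univ \ {i}, (if y j then (1:ℝ) else 0) := by
        rw [Finset.sum_update_of_mem (Finset.mem_univ i)]
    _ = _ := by
        rw [Finset.sum_eq_sum_sdiff_singleton_add (Finset.mem_univ i)
          (fun j => if y j then (1:ℝ) else 0)]
        ring

lemma majInd_flip (n : ℕ) (θ : Bool) (y : Fin n → Bool) (i : Fin n) (hyi : y i = θ) :
    majInd n θ y ≤ majInd n θ (Function.update y i (!θ)) := by
  unfold majInd majorityRule
  rw [kR_update, hyi]
  cases θ <;> simp only [Bool.not_true, Bool.not_false] <;> split_ifs <;>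
    first | linarith | simp_all

lemma risk_maj_update_le (n : ℕ) (θ : Bool) (γ : Fin n → ℝ)
    (hγ : ∀ j, 0 ≤ γ j ∧ γ j ≤ 1) (i : Fin n) (s t : ℝ) (hst : s ≤ t) :
    crowdRisk n (majorityRule n) θ (Function.update γ i t)
      ≤ crowdRisk n (majorityRule n) θ (Function.update γ i s) := by
  classical
  set W : (Fin n → Bool) → ℝ :=
    fun y => ∏ j ∈ univ.erase i, (if y j = θ then γ j else 1 - γ j) with hW
  have hWnn : ∀ y, 0 ≤ W y := by
    intro y
    refine Finset.prod_nonneg fun j _ => ?_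
    rcases hγ j with ⟨h1, h2⟩
    split_ifs <;> linarith
  have hprob : ∀ r : ℝ, ∀ y : Fin n → Bool,
      crowdProb n θ (Function.update γ i r) y = (if y i = θ then r else 1 - r) * W y := by
    intro r y
    unfold crowdProb
    rw [← Finset.mul_prod_erase _ _ (Finset.mem_univ i)]
    congr 1
    · simp
    · refine Finset.prod_congr rfl fun j hj => ?_
      rw [Function.update_of_ne (Finset.ne_of_mem_erase hj)]
  have hrisk : ∀ r : ℝ,
      crowdRisk n (majorityRule n) θ (Function.update γ i r)
        = r * (∑ y ∈ univ.filter (fun y : Fin n → Bool => y i = θ), W y * majInd n θ y)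
          + (1 - r) * (∑ y ∈ univ.filter (fun y : Fin n → Bool => ¬ (y i = θ)), W y * majInd n θ y) := by
    intro r
    rw [crowdRisk_majority]
    have : ∀ y : Fin n → Bool, crowdProb n θ (Function.update γ i r) y * majInd n θ y
        = (if y i = θ then r else 1 - r) * (W y * majInd n θ y) := by
      intro y; rw [hprob]; ring
    rw [Finset.sum_congr rfl fun y _ => this y]
    rw [← Finset.sum_filter_add_sum_filter_not univ (fun y : Fin n → Bool => y i = θ)]
    rw [Finset.mul_sum, Finset.mul_sum]
    congr 1
    · refine Finset.sum_congr rfl fun y hy => ?_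
      rw [if_pos (Finset.mem_filter.mp hy).2]
    · refine Finset.sum_congr rfl fun y hy => ?_
      rw [if_neg (Finset.mem_filter.mp hy).2]
  have hAC : (∑ y ∈ univ.filter (fun y : Fin n → Bool => y i = θ), W y * majInd n θ y)
      ≤ ∑ y ∈ univ.filter (fun y : Fin n → Bool => ¬ (y i = θ)), W y * majInd n θ y := by
    have step1 : (∑ y ∈ univ.filter (fun y : Fin n → Bool => y i = θ), W y * majInd n θ y)
        ≤ ∑ y ∈ univ.filter (fun y : Fin n → Bool => y i = θ),
            W y * majInd n θ (Function.update y i (!θ)) := by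
      refine Finset.sum_le_sum fun y hy => ?_
      have hyi : y i = θ := (Finset.mem_filter.mp hy).2
      exact mul_le_mul_of_nonneg_left (majInd_flip n θ y i hyi) (hWnn y)
    refine step1.trans_eq ?_
    refine Finset.sum_nbij' (fun y => Function.update y i (!θ)) (fun z => Function.update z i θ)
      ?_ ?_ ?_ ?_ ?_
    · intro y hy
      simp only [Finset.mem_filter, Finset.mem_univ, true_and] at *
      simp
    · intro z hz
      simp only [Finset.mem_filter, Finset.mem_univ, true_and] at *
      simp
    · intro y hy
      simp only [Finset.mem_filter, Finset.mem_univ, true_and] at hy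
      funext j
      by_cases h : j = i
      · subst h; simp [hy]
      · simp [Function.update_of_ne h]
    · intro z hz
      simp only [Finset.mem_filter, Finset.mem_univ, true_and] at hz
      have hz' : z i = !θ := by
        cases θ <;> cases hzi : z i <;> simp_all
      funext j
      by_cases h : j = i
      · subst h; simp [hz']
      · simp [Function.update_of_ne h]
    · intro y hy
      show W y * majInd n θ (Function.update y i (!θ))
        = W (Function.update y i (!θ)) * majInd n θ (Function.update y i (!θ))
      congr 1
      refine Finset.prod_congr rfl fun j hj => ?_
      rw [Function.update_of_ne (Finset.ne_of_mem_erase hj)]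
  rw [hrisk t, hrisk s]
  nlinarith [mul_le_mul_of_nonneg_left hAC (sub_nonneg.mpr hst)]


lemma risk_maj_le_const (n : ℕ) (θ : Bool) (p : ℝ) (hp0 : 0 ≤ p) (hp1 : p ≤ 1)
    (γ : Fin n → ℝ) (hγ : ∀ i, p ≤ γ i ∧ γ i ≤ 1) :
    crowdRisk n (majorityRule n) θ γ ≤ crowdRisk n (majorityRule n) θ (fun _ => p) := by
  classical
  have key : ∀ S : Finset (Fin n),
      crowdRisk n (majorityRule n) θ (fun j => if j ∈ S then γ j else p)
        ≤ crowdRisk n (majorityRule n) θ (fun _ => p) := by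
    intro S
    induction S using Finset.induction_on with
    | empty => simp
    | insert _ _ hi ih =>
      rename_i a S
      set base : Fin n → ℝ := fun j => if j ∈ S then γ j else p with hbase
      have hb : ∀ j, 0 ≤ base j ∧ base j ≤ 1 := by
        intro j
        simp only [hbase]
        split_ifs with h
        · exact ⟨hp0.trans (hγ j).1, (hγ j).2⟩
        · exact ⟨hp0, hp1⟩
      have h1 : (fun j => if j ∈ insert a S then γ j else p) = Function.update base a (γ a) := by
        funext j
        by_cases h : j = a
        · subst h; simp [hbase]
        · simp [Function.update_of_ne h, hbase, h]
      have h2 : base = Function.update base a p := by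
        funext j
        by_cases h : j = a
        · subst h; simp [hbase, hi]
        · simp [Function.update_of_ne h]
      calc crowdRisk n (majorityRule n) θ (fun j => if j ∈ insert a S then γ j else p)
          = crowdRisk n (majorityRule n) θ (Function.update base a (γ a)) := by rw [h1]
        _ ≤ crowdRisk n (majorityRule n) θ (Function.update base a p) :=
            risk_maj_update_le n θ base hb a p (γ a) (hγ a).1
        _ = crowdRisk n (majorityRule n) θ base := by rw [← h2]
        _ ≤ _ := ih
  have := key univ
  simpa using this

lemma crowdProb_nonneg (n : ℕ) (θ : Bool) (γ : Fin n → ℝ) (hγ : ∀ i, 0 ≤ γ i ∧ γ i ≤ 1)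
    (y : Fin n → Bool) : 0 ≤ crowdProb n θ γ y := by
  refine Finset.prod_nonneg fun j _ => ?_
  rcases hγ j with ⟨h1, h2⟩
  split_ifs <;> linarith

lemma crowdProb_le_one (n : ℕ) (θ : Bool) (γ : Fin n → ℝ) (hγ : ∀ i, 0 ≤ γ i ∧ γ i ≤ 1)
    (y : Fin n → Bool) : crowdProb n θ γ y ≤ 1 := by
  refine Finset.prod_le_one (fun j _ => ?_) (fun j _ => ?_)
  · rcases hγ j with ⟨h1, h2⟩; split_ifs <;> linarith
  · rcases hγ j with ⟨h1, h2⟩; split_ifs <;> linarith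

lemma crowdRisk_nonneg (n : ℕ) (δ : (Fin n → Bool) → Bool → Bool) (θ : Bool) (γ : Fin n → ℝ)
    (hγ : ∀ i, 0 ≤ γ i ∧ γ i ≤ 1) : 0 ≤ crowdRisk n δ θ γ := by
  refine Finset.sum_nonneg fun y _ => Finset.sum_nonneg fun u _ => ?_
  have h1 := crowdProb_nonneg n θ γ hγ y
  have h2 : (0:ℝ) ≤ (if δ y u = θ then 0 else 1) := by split_ifs <;> norm_num
  positivity

lemma crowdRisk_le_bound (n : ℕ) (δ : (Fin n → Bool) → Bool → Bool) (θ : Bool) (γ : Fin n → ℝ)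
    (hγ : ∀ i, 0 ≤ γ i ∧ γ i ≤ 1) :
    crowdRisk n δ θ γ ≤ (Fintype.card (Fin n → Bool) : ℝ) := by
  have : crowdRisk n δ θ γ ≤ ∑ y : Fin n → Bool, ∑ u : Bool, (1/2 : ℝ) := by
    refine Finset.sum_le_sum fun y _ => Finset.sum_le_sum fun u _ => ?_
    have h1 := crowdProb_nonneg n θ γ hγ y
    have h2 := crowdProb_le_one n θ γ hγ y
    have h3 : (if δ y u = θ then (0:ℝ) else 1) ≤ 1 := by split_ifs <;> norm_num
    have h4 : (0:ℝ) ≤ (if δ y u = θ then 0 else 1) := by split_ifs <;> norm_num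
    nlinarith [h1, h2, h3, h4]
  refine this.trans ?_
  simp [Finset.sum_const, Finset.card_univ]

lemma pow_mul_pow_le (p q : ℝ) (hq : 0 ≤ q) (hpq : q ≤ p) {a b : ℕ} (hab : a ≤ b) :
    p ^ a * q ^ b ≤ p ^ b * q ^ a := by
  have hp : 0 ≤ p := hq.trans hpq
  have hb' : b = a + (b - a) := by omega
  rw [hb', pow_add, pow_add]
  have h1 : q ^ (b - a) ≤ p ^ (b - a) := pow_le_pow_left₀ hq hpq _
  have h2 : 0 ≤ p ^ a * q ^ a := by positivity
  calc p ^ a * (q ^ a * q ^ (b - a)) = (p ^ a * q ^ a) * q ^ (b - a) := by ring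
    _ ≤ (p ^ a * q ^ a) * p ^ (b - a) := mul_le_mul_of_nonneg_left h1 h2
    _ = p ^ a * p ^ (b - a) * q ^ a := by ring

lemma maj_bayes_opt (n : ℕ) (hn : Odd n) (ε : ℝ) (hε0 : 0 < ε) (hε1 : ε < 1/2)
    (δ : (Fin n → Bool) → Bool → Bool) :
    crowdRisk n (majorityRule n) false (fun _ => 1/2 + ε)
      + crowdRisk n (majorityRule n) true (fun _ => 1/2 + ε)
    ≤ crowdRisk n δ false (fun _ => 1/2 + ε) + crowdRisk n δ true (fun _ => 1/2 + ε) := by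
  classical
  set p : ℝ := 1/2 + ε with hp
  set q : ℝ := 1/2 - ε with hq
  have hq0 : 0 ≤ q := by rw [hq]; linarith
  have hqp : q ≤ p := by rw [hq, hp]; linarith
  unfold crowdRisk
  rw [← Finset.sum_add_distrib, ← Finset.sum_add_distrib]
  refine Finset.sum_le_sum fun y _ => ?_
  rw [← Finset.sum_add_distrib, ← Finset.sum_add_distrib]
  refine Finset.sum_le_sum fun u _ => ?_
  set P0 : ℝ := crowdProb n false (fun _ => p) y with hP0
  set P1 : ℝ := crowdProb n true (fun _ => p) y with hP1
  have hkn := kOf_le n y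
  have h1mp : (1:ℝ) - p = q := by rw [hp, hq]; ring
  have hP0e : P0 = q ^ kOf y * p ^ (n - kOf y) := by
    rw [hP0, crowdProb_const_false, h1mp]
  have hP1e : P1 = p ^ kOf y * q ^ (n - kOf y) := by
    rw [hP1, crowdProb_const_true, h1mp]
  -- comparison facts
  have hcmp1 : (n : ℝ) / 2 < (kOf y : ℝ) → P0 ≤ P1 := by
    intro h
    have h' : n - kOf y ≤ kOf y := by
      have : (n : ℝ) < 2 * (kOf y : ℝ) := by linarith
      have : n < 2 * kOf y := by exact_mod_cast this
      omega
    rw [hP0e, hP1e]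
    calc q ^ kOf y * p ^ (n - kOf y) = p ^ (n - kOf y) * q ^ kOf y := by ring
      _ ≤ p ^ (kOf y) * q ^ (n - kOf y) := pow_mul_pow_le p q hq0 hqp h'
  have hcmp2 : ¬ ((n : ℝ) / 2 < (kOf y : ℝ)) → P1 ≤ P0 := by
    intro h
    have h' : kOf y ≤ n - kOf y := by
      have : (kOf y : ℝ) ≤ (n : ℝ) / 2 := not_lt.mp h
      have : 2 * (kOf y : ℝ) ≤ (n : ℝ) := by linarith
      have : 2 * kOf y ≤ n := by exact_mod_cast this
      omega
    rw [hP0e, hP1e]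
    calc p ^ kOf y * q ^ (n - kOf y) ≤ p ^ (n - kOf y) * q ^ kOf y :=
        pow_mul_pow_le p q hq0 hqp h'
      _ = q ^ kOf y * p ^ (n - kOf y) := by ring
  -- the majority rule value
  have hmaj : majorityRule n y u = (if (n : ℝ) / 2 < (kOf y : ℝ) then true else false) := by
    unfold majorityRule
    rw [kR_eq]
  by_cases h : (n : ℝ) / 2 < (kOf y : ℝ)
  · -- majority says true
    rw [hmaj, if_pos h]
    cases hb : δ y u
    · -- δ says false : its cost is P1, majority's is P0
      simp only [Bool.false_eq_true, Bool.true_eq_false, if_neg, if_pos]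
      have := hcmp1 h
      norm_num
      linarith
    · simp
  · -- majority says false
    rw [hmaj, if_neg h]
    cases hb : δ y u
    · simp
    · have := hcmp2 h
      norm_num
      linarith

/-- on the restricted parameter space
`Θ* = {(θ,γ) : θ ∈ {0,1}, γᵢ ≥ 1/2 + ε for all i}` (with `ε ∈ (0,1/2)`, `n` odd,
accuracies being probabilities), the majority rule is minimax, and the minimax risk
equals `P(Bin(n, 1/2 − ε) > n/2)`. -/
theorem majority_minimax_restricted (n : ℕ) (hn : Odd n) (ε : ℝ) (hε0 : 0 < ε)
    (hε1 : ε < 1 / 2) :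
    (⨆ θ : Bool, ⨆ γ : {g : Fin n → ℝ // ∀ i, 1 / 2 + ε ≤ g i ∧ g i ≤ 1},
        crowdRisk n (majorityRule n) θ γ.1) =
      (⨅ δ : (Fin n → Bool) → Bool → Bool,
        ⨆ θ : Bool, ⨆ γ : {g : Fin n → ℝ // ∀ i, 1 / 2 + ε ≤ g i ∧ g i ≤ 1},
          crowdRisk n δ θ γ.1) ∧
    (⨆ θ : Bool, ⨆ γ : {g : Fin n → ℝ // ∀ i, 1 / 2 + ε ≤ g i ∧ g i ≤ 1},
        crowdRisk n (majorityRule n) θ γ.1) =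
      ∑ k ∈ Finset.range (n + 1),
        if (n : ℝ) / 2 < (k : ℝ) then
          (n.choose k : ℝ) * (1 / 2 - ε) ^ k * (1 / 2 + ε) ^ (n - k)
        else 0 := by
  classical
  have hp0 : (0:ℝ) ≤ 1/2 + ε := by linarith
  have hp1' : (1/2 + ε : ℝ) ≤ 1 := by linarith
  set Γ := {g : Fin n → ℝ // ∀ i, 1 / 2 + ε ≤ g i ∧ g i ≤ 1} with hΓ
  have hhalf : (1:ℝ)/2 + ε = 1 / 2 + ε := rfl
  let γ₀ : Γ := ⟨fun _ => 1/2 + ε, fun i => ⟨le_rfl, hp1'⟩⟩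
  haveI : Nonempty Γ := ⟨γ₀⟩
  have hmem : ∀ (γ : Γ) (i : Fin n), 0 ≤ γ.1 i ∧ γ.1 i ≤ 1 :=
    fun γ i => ⟨hp0.trans (γ.2 i).1, (γ.2 i).2⟩
  have hB0 : crowdRisk n (majorityRule n) false γ₀.1 = binTail n ε :=
    risk_maj_const_false n ε
  have hB1 : crowdRisk n (majorityRule n) true γ₀.1 = binTail n ε :=
    risk_maj_const_true n hn ε
  have hub : ∀ (θ : Bool) (γ : Γ),
      crowdRisk n (majorityRule n) θ γ.1 ≤ binTail n ε := by
    intro θ γ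
    refine (risk_maj_le_const n θ (1/2 + ε) hp0 hp1' γ.1 γ.2).trans_eq ?_
    cases θ
    · exact hB0
    · exact hB1
  set F : ((Fin n → Bool) → Bool → Bool) → ℝ :=
    fun δ => ⨆ θ : Bool, ⨆ γ : Γ, crowdRisk n δ θ γ.1 with hF
  have bddInner : ∀ (δ : (Fin n → Bool) → Bool → Bool) (θ : Bool),
      BddAbove (Set.range fun γ : Γ => crowdRisk n δ θ γ.1) := by
    intro δ θ
    refine ⟨(Fintype.card (Fin n → Bool) : ℝ), ?_⟩
    rintro x ⟨γ, rfl⟩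
    exact crowdRisk_le_bound n δ θ γ.1 (hmem γ)
  have hleF : ∀ (δ : (Fin n → Bool) → Bool → Bool) (θ : Bool) (γ : Γ),
      crowdRisk n δ θ γ.1 ≤ F δ := by
    intro δ θ γ
    refine le_trans (le_ciSup (bddInner δ θ) γ) ?_
    exact le_ciSup (f := fun θ : Bool => ⨆ γ : Γ, crowdRisk n δ θ γ.1)
      (Set.finite_range _).bddAbove θ
  have hFmaj : F (majorityRule n) = binTail n ε := by
    apply le_antisymm
    · exact ciSup_le fun θ => ciSup_le fun γ => hub θ γ
    · exact hB0 ▸ hleF (majorityRule n) false γ₀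
  constructor
  · show F (majorityRule n) = ⨅ δ, F δ
    apply le_antisymm
    · refine le_ciInf fun δ => ?_
      have ha := hleF δ false γ₀
      have hb := hleF δ true γ₀
      have hbayes := maj_bayes_opt n hn ε hε0 hε1 δ
      rw [hFmaj]
      have h0 : crowdRisk n (majorityRule n) false (fun _ => 1/2 + ε) = binTail n ε := hB0
      have h1 : crowdRisk n (majorityRule n) true (fun _ => 1/2 + ε) = binTail n ε := hB1
      rw [h0, h1] at hbayes
      have hc0 : crowdRisk n δ false (fun _ => 1/2 + ε) = crowdRisk n δ false γ₀.1 := rfl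
      have hc1 : crowdRisk n δ true (fun _ => 1/2 + ε) = crowdRisk n δ true γ₀.1 := rfl
      rw [hc0, hc1] at hbayes
      linarith
    · refine ciInf_le ⟨0, ?_⟩ (majorityRule n)
      rintro x ⟨δ, rfl⟩
      exact le_trans (crowdRisk_nonneg n δ false γ₀.1 (hmem γ₀)) (hleF δ false γ₀)
  · exact hFmaj

end Aux
end
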